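/- arXiv:2505.17831 — 3 statements merged into one kernel-verified Lean document; each statement's English description precedes it below -/
import Mathlib

section
/- If R₀ = αΛ/(μ(γI+μ)) < 1 and all parameters Λ, μ, α, γI, γE are positive, then the delinquence-free equilibrium (Λ/μ, 0, 0) of the crime model is locally asymptotically stable (every eigenvalue of the Jacobian there has negative real part). -/
open Matrix

/-- if R₀ = αΛ/(μ(γI+μ)) < 1 then every eigenvalue of the Jacobian at the
delinquence-free equilibrium (Λ/μ, 0, 0) has negative real part. -/
theorem stmt9 (Λ μ α γI γE ρ : ℝ) (hΛ : 0 < Λ) (hμ : 0 < μ) (hα : 0 < α)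
    (hγI : 0 < γI) (hγE : 0 < γE)
    (hR₀ : α * Λ / (μ * (γI + μ)) < 1) :
    ∀ z ∈ spectrum ℂ
      ((!![-μ, γI - α * Λ / μ, γE;
           0, α * Λ / μ - γI - μ, 0;
           0, 0, -γE - μ] : Matrix (Fin 3) (Fin 3) ℝ).map (algebraMap ℝ ℂ)),
      z.re < 0 := by
  intro z hz
  rw [spectrum.mem_iff, Matrix.isUnit_iff_isUnit_det, isUnit_iff_ne_zero, not_ne_iff] at hz
  have hdet : ((z + μ) * (z - (α * Λ / μ - γI - μ)) * (z + (γE + μ))) = 0 := by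
    have key : ((algebraMap ℂ (Matrix (Fin 3) (Fin 3) ℂ)) z -
        (!![-μ, γI - α * Λ / μ, γE;
           0, α * Λ / μ - γI - μ, 0;
           0, 0, -γE - μ] : Matrix (Fin 3) (Fin 3) ℝ).map (algebraMap ℝ ℂ)).det
        = (z + μ) * (z - (α * Λ / μ - γI - μ)) * (z + (γE + μ)) := by
      simp [Matrix.det_fin_three, Matrix.algebraMap_matrix_apply, Matrix.map_apply,
        Matrix.sub_apply, Matrix.vecHead, Matrix.vecTail, Function.comp]
      left; push_cast; ring
    rw [← key, hz]
  have hmid : α * Λ / μ - γI - μ < 0 := by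
    have h1 : α * Λ < μ * (γI + μ) := by
      have := (div_lt_one (by positivity : (0:ℝ) < μ * (γI + μ))).mp hR₀
      linarith
    have h2 : α * Λ / μ < γI + μ := by
      rw [div_lt_iff₀ hμ]; nlinarith
    linarith
  rcases mul_eq_zero.mp hdet with h | h
  · rcases mul_eq_zero.mp h with h | h
    · have : z = -(μ : ℂ) := by linear_combination h
      rw [this]; simpa using hμ
    · have : z = ((α * Λ / μ - γI - μ : ℝ) : ℂ) := by push_cast; linear_combination h
      rw [this]; simpa using hmid
  · have : z = -((γE + μ : ℝ) : ℂ) := by push_cast; linear_combination h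
    rw [this]; simp; linarith
end

section
/- The eigenvalues of the Jacobian at the education-free equilibrium (X*, I*, E*) = ((γI+μ)/α, N₀-(γI+μ)/α, 0), namely the matrix [[γI - N₀α, -μ, γE],[N₀α - μ - γI, 0, -ρ(N₀-(γI+μ)/α)],[0, 0, ρ(N₀-(γI+μ)/α) - μ - γE]], are λ₁ = -μ, λ₂ = (1-R₀)(μ+γI), and λ₃ = (ρ/α)(R₀-1)(μ+γI) - μ - γE, where R₀ = N₀α/(γI+μ). -/
set_option maxHeartbeats 1000000


open Matrix

/-- the eigenvalues of the Jacobian at the education-free equilibrium are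
λ₁ = -μ, λ₂ = (1-R₀)(μ+γI), λ₃ = (ρ/α)(R₀-1)(μ+γI) - μ - γE, where R₀ = N₀α/(γI+μ). -/
theorem stmt10 (α ρ μ γI γE N₀ : ℝ) (hα : 0 < α) (hρ : 0 < ρ) (hμ : 0 < μ)
    (hγI : 0 < γI) (hγE : 0 < γE) (hN₀ : 0 < N₀)
    (R₀ : ℝ) (hR₀ : R₀ = N₀ * α / (γI + μ)) :
    spectrum ℝ
        (!![γI - N₀ * α, -μ, γE;
            N₀ * α - μ - γI, 0, -ρ * (N₀ - (γI + μ) / α);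
            0, 0, ρ * (N₀ - (γI + μ) / α) - μ - γE] : Matrix (Fin 3) (Fin 3) ℝ) =
      {-μ, (1 - R₀) * (μ + γI), (ρ / α) * (R₀ - 1) * (μ + γI) - μ - γE} := by
  have hα' : α ≠ 0 := hα.ne'
  have hγμ : γI + μ ≠ 0 := by positivity
  ext x
  rw [spectrum.mem_iff, Matrix.isUnit_iff_isUnit_det, isUnit_iff_ne_zero, not_not]
  have key : ((algebraMap ℝ (Matrix (Fin 3) (Fin 3) ℝ)) x -
      (!![γI - N₀ * α, -μ, γE;
          N₀ * α - μ - γI, 0, -ρ * (N₀ - (γI + μ) / α);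
          0, 0, ρ * (N₀ - (γI + μ) / α) - μ - γE] : Matrix (Fin 3) (Fin 3) ℝ)).det
      = (x - (-μ)) * ((x - (1 - R₀) * (μ + γI)) *
          (x - ((ρ / α) * (R₀ - 1) * (μ + γI) - μ - γE))) := by
    have h2 : (1 - R₀) * (μ + γI) = μ + γI - N₀ * α := by
      rw [hR₀]; field_simp; ring
    have h3 : (ρ / α) * (R₀ - 1) * (μ + γI) = ρ * (N₀ - (γI + μ) / α) := by
      rw [hR₀]; field_simp; ring
    have hd : (algebraMap ℝ (Matrix (Fin 3) (Fin 3) ℝ)) x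
        = !![x, 0, 0; 0, x, 0; 0, 0, x] := by
      ext i j
      fin_cases i <;> fin_cases j <;>
        simp [Matrix.algebraMap_eq_diagonal, Matrix.diagonal, Matrix.vecHead, Matrix.vecTail]
    rw [h2, h3, hd]
    simp [Matrix.det_fin_three, Matrix.sub_apply]
    field_simp
    ring
  rw [key]
  simp only [Set.mem_insert_iff, Set.mem_singleton_iff, mul_eq_zero, sub_eq_zero]
end

section
/- Let R₀ = N₀α/(γI+μ) and C̄ = 1 + α(γE+μ)/(ρ(γI+μ)). If 1 < R₀ < C̄, then all three eigenvalues -μ, (1-R₀)(μ+γI), and (ρ/α)(R₀-1)(μ+γI) - μ - γE of the education-free Jacobian are strictly negative. -/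
/-- if 1 < R₀ < C̄ = 1 + α(γE+μ)/(ρ(γI+μ)), then the three eigenvalues of
the education-free Jacobian are strictly negative. -/
theorem stmt11 (α ρ μ γI γE N₀ R₀ : ℝ) (hα : 0 < α) (hρ : 0 < ρ) (hμ : 0 < μ)
    (hγI : 0 < γI) (hγE : 0 < γE) (hN₀ : 0 < N₀)
    (hR₀ : R₀ = N₀ * α / (γI + μ))
    (h1 : 1 < R₀) (h2 : R₀ < 1 + α * (γE + μ) / (ρ * (γI + μ))) :
    -μ < 0 ∧ (1 - R₀) * (μ + γI) < 0 ∧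
      (ρ / α) * (R₀ - 1) * (μ + γI) - μ - γE < 0 := by
  refine ⟨by linarith, by nlinarith, ?_⟩
  have hd : 0 < ρ * (γI + μ) := by positivity
  have h2' : (R₀ - 1) * (ρ * (γI + μ)) < α * (γE + μ) := by
    have h3 : R₀ - 1 < α * (γE + μ) / (ρ * (γI + μ)) := by linarith
    exact (lt_div_iff₀ hd).mp h3
  have : (ρ / α) * (R₀ - 1) * (μ + γI) < μ + γE := by
    rw [div_mul_eq_mul_div, div_mul_eq_mul_div, div_lt_iff₀ hα]
    nlinarith
  linarith
end
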